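/- Let N ≥ 1 be an integer. For every real α > N and every θ ≥ 0 there exists a > 0 (depending on α, θ and N) such that the function Γ : ℤ^N → (0,∞) defined by Γ(i) = a·|i|^{−α}·e^{−θ|i|} for i ≠ 0 and Γ(0) = a is a decay function, i.e. it satisfies ∑_{j∈ℤ^N} Γ(j) ≤ 1 and ∑_{j∈ℤ^N} Γ(i−j)Γ(j−k) ≤ Γ(i−k) for all i, k ∈ ℤ^N. -/

import Mathlib

open scoped BigOperators

noncomputable section

/-- The ℓ¹-norm of a lattice point `i ∈ ℤ^N`, as a real number. -/
def l1norm {N : ℕ} (i : Fin N → ℤ) : ℝ := ∑ s, |(i s : ℝ)|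

namespace DecayAux

variable {N : ℕ}

lemma l1norm_nonneg (i : Fin N → ℤ) : 0 ≤ l1norm i :=
  Finset.sum_nonneg fun s _ => abs_nonneg _

lemma l1norm_zero : l1norm (0 : Fin N → ℤ) = 0 := by simp [l1norm]

lemma abs_le_l1norm (i : Fin N → ℤ) (s : Fin N) : |(i s : ℝ)| ≤ l1norm i := by
  rw [l1norm]
  exact Finset.single_le_sum (f := fun t => |(i t : ℝ)|) (fun t _ => abs_nonneg _)
    (Finset.mem_univ s)

lemma one_le_l1norm {i : Fin N → ℤ} (h : i ≠ 0) : 1 ≤ l1norm i := by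
  obtain ⟨s, hs⟩ : ∃ s, i s ≠ 0 := by
    by_contra hc; push_neg at hc; exact h (funext hc)
  refine le_trans ?_ (abs_le_l1norm i s)
  have : (1:ℤ) ≤ |i s| := Int.one_le_abs hs
  calc (1:ℝ) ≤ ((|i s| : ℤ) : ℝ) := by exact_mod_cast this
    _ = |(i s : ℝ)| := by push_cast; ring
lemma l1norm_add_le (i j : Fin N → ℤ) : l1norm (i + j) ≤ l1norm i + l1norm j := by
  rw [l1norm, l1norm, l1norm, ← Finset.sum_add_distrib]
  refine Finset.sum_le_sum fun s _ => ?_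
  have : ((i + j) s : ℝ) = (i s : ℝ) + (j s : ℝ) := by push_cast [Pi.add_apply]; ring
  rw [this]; exact abs_add_le _ _

lemma l1norm_sub_le (m j : Fin N → ℤ) : l1norm m ≤ l1norm (m - j) + l1norm j := by
  have := l1norm_add_le (m - j) j
  simpa using this


def psi (α : ℝ) {N : ℕ} (i : Fin N → ℤ) : ℝ := if i = 0 then 1 else l1norm i ^ (-α)

lemma psi_pos (α : ℝ) (i : Fin N → ℤ) : 0 < psi α i := by
  unfold psi; split
  · norm_num
  · exact Real.rpow_pos_of_pos (lt_of_lt_of_le one_pos (one_le_l1norm ‹_›)) _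

lemma psi_le_one {α : ℝ} (hα : 0 ≤ α) (i : Fin N → ℤ) : psi α i ≤ 1 := by
  unfold psi; split
  · exact le_rfl
  · exact Real.rpow_le_one_of_one_le_of_nonpos (one_le_l1norm ‹_›) (neg_nonpos.mpr hα)

lemma summable_g {β : ℝ} (hβ : 1 < β) :
    Summable (fun n : ℤ => (max 1 |(n : ℝ)|) ^ (-β)) := by
  have h1 : Summable (fun n : ℤ => |(n : ℝ)| ^ (-β)) := Real.summable_abs_int_rpow hβ
  have h2 : Summable (fun n : ℤ => (if n = 0 then (1:ℝ) else 0) + |(n : ℝ)| ^ (-β)) := by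
    refine Summable.add ?_ h1
    exact summable_of_ne_finset_zero (s := {0}) (by intro n hn; simp at hn; simp [hn])
  refine h2.of_nonneg_of_le (fun n => Real.rpow_nonneg (le_trans zero_le_one (le_max_left _ _)) _)
    (fun n => ?_)
  by_cases hn : n = 0
  · subst hn; simp [Real.rpow_nonneg]
  · have h1n : (1:ℝ) ≤ |(n:ℝ)| := by
      have h := Int.one_le_abs hn
      rw [← Int.cast_abs]; exact_mod_cast h
    rw [max_eq_right h1n]
    simp [hn]

lemma summable_pi_prod {g : ℤ → ℝ} (hg : Summable g) (hg0 : ∀ n, 0 ≤ g n) (n : ℕ) :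
    Summable (fun i : Fin n → ℤ => ∏ s, g (i s)) := by
  induction n with
  | zero =>
    haveI : Finite (Fin 0 → ℤ) := Finite.of_subsingleton
    exact Summable.of_finite
  | succ n ih =>
    have hp : Summable (fun p : ℤ × (Fin n → ℤ) => g p.1 * ∏ s, g (p.2 s)) :=
      Summable.mul_of_nonneg (f := g) (g := fun i : Fin n → ℤ => ∏ s, g (i s)) hg ih
        (fun m => hg0 m) (fun i => Finset.prod_nonneg fun s _ => hg0 _)
    have := ((Fin.consEquiv (fun _ : Fin (n+1) => ℤ)).symm.summable_iff
      (f := fun p : ℤ × (Fin n → ℤ) => g p.1 * ∏ s, g (p.2 s))).mpr hp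
    refine this.congr fun i => ?_
    simp [Fin.consEquiv, Fin.prod_univ_succ, Function.comp, Fin.tail]

namespace Part2
variable {N : ℕ} {α θ : ℝ}

lemma psi_nonneg (α : ℝ) (i : Fin N → ℤ) : 0 ≤ psi α i := (psi_pos α i).le

lemma summable_psi (hN : 1 ≤ N) (hα : (N:ℝ) < α) :
    Summable (fun i : Fin N → ℤ => psi α i) := by
  have hN0 : (0:ℝ) < N := by exact_mod_cast hN
  have hα0 : 0 < α := lt_trans hN0 hα
  set β := α / N with hβdef
  have hβ : 1 < β := (one_lt_div hN0).mpr hα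
  have hβ0 : 0 < β := lt_trans one_pos hβ
  set g : ℤ → ℝ := fun n => (max 1 |(n : ℝ)|) ^ (-β) with hgdef
  have hg0 : ∀ n, 0 ≤ g n := fun n => Real.rpow_nonneg (le_trans zero_le_one (le_max_left _ _)) _
  have hsum := summable_pi_prod (summable_g hβ) hg0 N
  refine hsum.of_nonneg_of_le (fun i => (psi_pos α i).le) (fun i => ?_)
  by_cases hi : i = 0
  · subst hi; simp [psi, hgdef]
  · have hL : 1 ≤ l1norm i := one_le_l1norm hi
    have hL0 : 0 < l1norm i := lt_of_lt_of_le one_pos hL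
    have hmax : ∀ s : Fin N, 0 ≤ max 1 |(i s : ℝ)| :=
      fun s => le_trans zero_le_one (le_max_left _ _)
    have hprodeq : ∏ s, g (i s) = (∏ s, max 1 |(i s : ℝ)|) ^ (-β) := by
      rw [hgdef]
      exact Real.finset_prod_rpow _ _ (fun s _ => hmax s) _
    rw [psi, if_neg hi, hprodeq]
    have hP1 : (1:ℝ) ≤ ∏ s, max 1 |(i s : ℝ)| := by
      have := Finset.prod_le_prod (s := Finset.univ) (f := fun _ : Fin N => (1:ℝ))
        (g := fun s => max 1 |(i s : ℝ)|) (fun _ _ => zero_le_one) (fun s _ => le_max_left _ _)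
      simpa using this
    have hPle : ∏ s, max 1 |(i s : ℝ)| ≤ l1norm i ^ N := by
      calc ∏ s, max 1 |(i s:ℝ)| ≤ ∏ _s : Fin N, l1norm i :=
            Finset.prod_le_prod (fun s _ => hmax s)
              (fun s _ => max_le hL (abs_le_l1norm i s))
        _ = l1norm i ^ N := by simp
    have key : (l1norm i ^ N : ℝ) ^ (-β) ≤ (∏ s, max 1 |(i s : ℝ)|) ^ (-β) :=
      Real.rpow_le_rpow_of_nonpos (lt_of_lt_of_le one_pos hP1) hPle (neg_nonpos.mpr hβ0.le)
    refine le_trans (le_of_eq ?_) key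
    rw [← Real.rpow_natCast (l1norm i) N, ← Real.rpow_mul hL0.le]
    congr 1
    rw [hβdef]
    field_simp

def gam (α θ : ℝ) {N : ℕ} (i : Fin N → ℤ) : ℝ := psi α i * Real.exp (-θ * l1norm i)

lemma gam_pos (i : Fin N → ℤ) : 0 < gam α θ i :=
  mul_pos (psi_pos α i) (Real.exp_pos _)

lemma gam_le_psi (hθ : 0 ≤ θ) (i : Fin N → ℤ) : gam α θ i ≤ psi α i := by
  have h1 : Real.exp (-θ * l1norm i) ≤ 1 := by
    rw [Real.exp_le_one_iff]
    have := l1norm_nonneg i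
    nlinarith
  calc gam α θ i ≤ psi α i * 1 :=
        mul_le_mul_of_nonneg_left h1 (psi_nonneg α i)
    _ = psi α i := mul_one _

lemma summable_gam (hN : 1 ≤ N) (hα : (N:ℝ) < α) (hθ : 0 ≤ θ) :
    Summable (fun i : Fin N → ℤ => gam α θ i) :=
  (summable_psi hN hα).of_nonneg_of_le (fun i => (gam_pos i).le) (gam_le_psi hθ)

lemma psi_twice (hα0 : 0 < α) {m u : Fin N → ℤ} (h : l1norm m ≤ 2 * l1norm u) :
    psi α u ≤ 2 ^ α * psi α m := by
  by_cases hm : m = 0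
  · have h1 : psi α u ≤ 1 := psi_le_one hα0.le u
    have h2 : (1:ℝ) ≤ 2 ^ α := by
      have := Real.rpow_le_rpow_of_exponent_le one_le_two hα0.le
      simpa using this
    have h3 : psi α m = 1 := by simp [psi, hm]
    rw [h3, mul_one]; exact h1.trans h2
  · have hm1 : 1 ≤ l1norm m := one_le_l1norm hm
    have hu0 : u ≠ 0 := by
      rintro rfl
      rw [l1norm_zero] at h
      linarith
    rw [psi, if_neg hu0, psi, if_neg hm]
    have hhalf : l1norm m / 2 ≤ l1norm u := by linarith
    have hpos : 0 < l1norm m / 2 := by linarith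
    have h1 : l1norm u ^ (-α) ≤ (l1norm m / 2) ^ (-α) :=
      Real.rpow_le_rpow_of_nonpos hpos hhalf (neg_nonpos.mpr hα0.le)
    refine h1.trans (le_of_eq ?_)
    rw [Real.div_rpow (by linarith : (0:ℝ) ≤ l1norm m) (by norm_num : (0:ℝ) ≤ 2),
      Real.rpow_neg (by norm_num : (0:ℝ) ≤ 2), div_eq_mul_inv, inv_inv, mul_comm]

lemma exp_conv (hθ : 0 ≤ θ) (m j : Fin N → ℤ) :
    Real.exp (-θ * l1norm (m - j)) * Real.exp (-θ * l1norm j) ≤ Real.exp (-θ * l1norm m) := by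
  rw [← Real.exp_add]
  apply Real.exp_le_exp.mpr
  have := l1norm_sub_le m j
  nlinarith

lemma key_pointwise (hα0 : 0 < α) (hθ : 0 ≤ θ) (m j : Fin N → ℤ) :
    gam α θ (m - j) * gam α θ j ≤
      2 ^ α * gam α θ m * (psi α j + psi α (m - j)) := by
  have hsplit : l1norm m ≤ 2 * l1norm (m - j) ∨ l1norm m ≤ 2 * l1norm j := by
    have := l1norm_sub_le m j
    by_contra hc
    push_neg at hc
    obtain ⟨h1, h2⟩ := hc
    linarith
  have e := exp_conv hθ m j
  have hEnn : (0:ℝ) ≤ Real.exp (-θ * l1norm (m-j)) * Real.exp (-θ * l1norm j) :=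
    le_of_lt (mul_pos (Real.exp_pos _) (Real.exp_pos _))
  have h2pos : (0:ℝ) < 2 ^ α := Real.rpow_pos_of_pos two_pos α
  rcases hsplit with hc | hc
  · have h1 : psi α (m - j) ≤ 2 ^ α * psi α m := psi_twice hα0 hc
    have step1 : gam α θ (m-j) * gam α θ j
        ≤ (psi α (m-j) * psi α j) * Real.exp (-θ * l1norm m) := by
      unfold gam
      have := mul_le_mul_of_nonneg_left e
        (mul_nonneg (psi_nonneg α (m-j)) (psi_nonneg α j))
      calc psi α (m-j) * Real.exp (-θ * l1norm (m-j)) * (psi α j * Real.exp (-θ * l1norm j))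
          = psi α (m-j) * psi α j * (Real.exp (-θ * l1norm (m-j)) * Real.exp (-θ * l1norm j)) := by
            ring
        _ ≤ _ := this
    refine step1.trans ?_
    have step2 : psi α (m-j) * psi α j ≤ 2 ^ α * psi α m * psi α j :=
      mul_le_mul_of_nonneg_right h1 (psi_nonneg α j)
    have step3 : psi α (m-j) * psi α j * Real.exp (-θ * l1norm m)
        ≤ 2 ^ α * psi α m * psi α j * Real.exp (-θ * l1norm m) :=
      mul_le_mul_of_nonneg_right step2 (Real.exp_pos _).le
    refine step3.trans ?_
    have : (2:ℝ) ^ α * psi α m * psi α j * Real.exp (-θ * l1norm m)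
        = 2 ^ α * gam α θ m * psi α j := by unfold gam; ring
    rw [this]
    have hfac : (0:ℝ) ≤ 2 ^ α * gam α θ m := le_of_lt (mul_pos h2pos (gam_pos m))
    nlinarith [psi_nonneg α (m - j)]
  · have h1 : psi α j ≤ 2 ^ α * psi α m := psi_twice hα0 hc
    have step1 : gam α θ (m-j) * gam α θ j
        ≤ (psi α (m-j) * psi α j) * Real.exp (-θ * l1norm m) := by
      unfold gam
      have := mul_le_mul_of_nonneg_left e
        (mul_nonneg (psi_nonneg α (m-j)) (psi_nonneg α j))
      calc psi α (m-j) * Real.exp (-θ * l1norm (m-j)) * (psi α j * Real.exp (-θ * l1norm j))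
          = psi α (m-j) * psi α j * (Real.exp (-θ * l1norm (m-j)) * Real.exp (-θ * l1norm j)) := by
            ring
        _ ≤ _ := this
    refine step1.trans ?_
    have step2 : psi α (m-j) * psi α j ≤ psi α (m-j) * (2 ^ α * psi α m) :=
      mul_le_mul_of_nonneg_left h1 (psi_nonneg α (m-j))
    have step3 : psi α (m-j) * psi α j * Real.exp (-θ * l1norm m)
        ≤ psi α (m-j) * (2 ^ α * psi α m) * Real.exp (-θ * l1norm m) :=
      mul_le_mul_of_nonneg_right step2 (Real.exp_pos _).le
    refine step3.trans ?_
    have : psi α (m-j) * (2 ^ α * psi α m) * Real.exp (-θ * l1norm m)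
        = 2 ^ α * gam α θ m * psi α (m-j) := by unfold gam; ring
    rw [this]
    have hfac : (0:ℝ) ≤ 2 ^ α * gam α θ m := le_of_lt (mul_pos h2pos (gam_pos m))
    nlinarith [psi_nonneg α j]

variable {N : ℕ} {α θ : ℝ}

lemma summable_shift (hN : 1 ≤ N) (hα : (N:ℝ) < α) (m : Fin N → ℤ) :
    Summable (fun j : Fin N → ℤ => psi α (m - j)) := by
  have := ((Equiv.subLeft m).summable_iff (f := fun i : Fin N → ℤ => psi α i)).mpr
    (summable_psi hN hα)
  exact this.congr fun j => rfl

lemma tsum_shift (m : Fin N → ℤ) :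
    ∑' j : Fin N → ℤ, psi α (m - j) = ∑' i : Fin N → ℤ, psi α i :=
  (Equiv.subLeft m).tsum_eq (fun i => psi α i)

lemma conv (hN : 1 ≤ N) (hα : (N:ℝ) < α) (hθ : 0 ≤ θ) (m : Fin N → ℤ) :
    Summable (fun j : Fin N → ℤ => gam α θ (m - j) * gam α θ j) ∧
      ∑' j : Fin N → ℤ, gam α θ (m - j) * gam α θ j ≤
        2 ^ α * (2 * ∑' i : Fin N → ℤ, psi α i) * gam α θ m := by
  have hN0 : (0:ℝ) ≤ N := Nat.cast_nonneg N
  have hα0 : 0 < α := lt_of_le_of_lt hN0 hα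
  have hD : Summable (fun j : Fin N → ℤ => 2 ^ α * gam α θ m * (psi α j + psi α (m - j))) :=
    ((summable_psi hN hα).add (summable_shift hN hα m)).mul_left _
  have hkey := fun j => key_pointwise (N := N) hα0 hθ m j
  have hS : Summable (fun j : Fin N → ℤ => gam α θ (m - j) * gam α θ j) :=
    hD.of_nonneg_of_le (fun j => (mul_pos (gam_pos _) (gam_pos _)).le) hkey
  refine ⟨hS, ?_⟩
  have h1 := Summable.tsum_le_tsum hkey hS hD
  refine h1.trans (le_of_eq ?_)
  rw [tsum_mul_left, Summable.tsum_add (summable_psi hN hα) (summable_shift hN hα m),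
    tsum_shift m]
  ring

lemma one_le_Spsi (hN : 1 ≤ N) (hα : (N:ℝ) < α) :
    (1:ℝ) ≤ ∑' i : Fin N → ℤ, psi α i := by
  have h0 : psi α (0 : Fin N → ℤ) = 1 := by simp [psi]
  have := Summable.le_tsum (summable_psi (α := α) hN hα) 0 (fun j _ => psi_nonneg α j)
  rwa [h0] at this


end Part2
end DecayAux


/-- `Γ : ℤ^N → (0,∞)` is a decay function when `∑_j Γ(j) ≤ 1` and
`∑_j Γ(i−j)Γ(j−k) ≤ Γ(i−k)` for all `i, k`. -/
def IsDecayFunction {N : ℕ} (Γ : (Fin N → ℤ) → ℝ) : Prop :=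
  (∀ i, 0 < Γ i) ∧ Summable Γ ∧ (∑' j, Γ j) ≤ 1 ∧
    ∀ i k : Fin N → ℤ, (∑' j, Γ (i - j) * Γ (j - k)) ≤ Γ (i - k)

open DecayAux DecayAux.Part2 in
/-- For every `α > N` and `θ ≥ 0` there is `a > 0` such that
`Γ(i) = a |i|^{-α} e^{-θ|i|}` (with `Γ(0) = a`) is a decay function. -/
theorem statement0 (N : ℕ) (hN : 1 ≤ N) (α θ : ℝ) (hα : (N : ℝ) < α) (hθ : 0 ≤ θ) :
    ∃ a : ℝ, 0 < a ∧ IsDecayFunction (fun i : Fin N → ℤ =>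
      if i = 0 then a else a * (l1norm i) ^ (-α) * Real.exp (-θ * l1norm i)) := by
  classical
  have hSψ1 : (1:ℝ) ≤ ∑' i : Fin N → ℤ, psi α i := one_le_Spsi hN hα
  set Sψ : ℝ := ∑' i : Fin N → ℤ, psi α i with hSdef
  have hSψ0 : 0 < Sψ := lt_of_lt_of_le one_pos hSψ1
  have h2α : (0:ℝ) < 2 ^ α := Real.rpow_pos_of_pos two_pos α
  set C : ℝ := 2 ^ α * (2 * Sψ) with hCdef
  have hC0 : 0 < C := mul_pos h2α (by linarith)
  set a : ℝ := min Sψ⁻¹ C⁻¹ with hadef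
  have ha0 : 0 < a := lt_min (inv_pos.mpr hSψ0) (inv_pos.mpr hC0)
  have haS : a ≤ Sψ⁻¹ := min_le_left _ _
  have haC : a * C ≤ 1 := by
    calc a * C ≤ C⁻¹ * C := mul_le_mul_of_nonneg_right (min_le_right _ _) hC0.le
      _ = 1 := inv_mul_cancel₀ (ne_of_gt hC0)
  have hform : ∀ i : Fin N → ℤ,
      (if i = 0 then a else a * (l1norm i) ^ (-α) * Real.exp (-θ * l1norm i))
        = a * gam α θ i := by
    intro i
    by_cases hi : i = 0
    · simp [hi, gam, psi, l1norm_zero]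
    · simp [hi, gam, psi, mul_assoc]
  have hsg := summable_gam (N := N) (α := α) (θ := θ) hN hα hθ
  refine ⟨a, ha0, ?_, ?_, ?_, ?_⟩
  · intro i
    show (0:ℝ) < if i = 0 then a else a * (l1norm i) ^ (-α) * Real.exp (-θ * l1norm i)
    rw [hform i]
    exact mul_pos ha0 (gam_pos i)
  · exact (hsg.mul_left a).congr fun i => (hform i).symm
  · have h1 : ∑' i : Fin N → ℤ,
        (if i = 0 then a else a * (l1norm i) ^ (-α) * Real.exp (-θ * l1norm i))
        = a * ∑' i : Fin N → ℤ, gam α θ i := by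
      rw [tsum_congr hform, tsum_mul_left]
    rw [h1]
    have hg_le : ∑' i : Fin N → ℤ, gam α θ i ≤ Sψ :=
      Summable.tsum_le_tsum (gam_le_psi hθ) hsg (summable_psi hN hα)
    have hg0 : 0 ≤ ∑' i : Fin N → ℤ, gam α θ i := tsum_nonneg fun i => (gam_pos i).le
    calc a * ∑' i : Fin N → ℤ, gam α θ i ≤ Sψ⁻¹ * Sψ :=
          mul_le_mul haS hg_le hg0 (inv_pos.mpr hSψ0).le
      _ = 1 := inv_mul_cancel₀ (ne_of_gt hSψ0)
  · intro i k
    simp only [hform]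
    set m : Fin N → ℤ := i - k with hm
    obtain ⟨hconvS, hconv⟩ := conv hN hα hθ m
    have hre : ∑' j : Fin N → ℤ, a * gam α θ (i - j) * (a * gam α θ (j - k))
        = a * a * ∑' j : Fin N → ℤ, gam α θ (m - j) * gam α θ j := by
      calc ∑' j : Fin N → ℤ, a * gam α θ (i - j) * (a * gam α θ (j - k))
          = ∑' j : Fin N → ℤ,
            (fun j => a * gam α θ (i - j) * (a * gam α θ (j - k))) ((Equiv.addRight k) j) :=
            ((Equiv.addRight k).tsum_eq
              (fun j => a * gam α θ (i - j) * (a * gam α θ (j - k)))).symm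
        _ = ∑' j : Fin N → ℤ, a * a * (gam α θ (m - j) * gam α θ j) := by
            refine tsum_congr fun j => ?_
            have h1 : i - (j + k) = m - j := by rw [hm]; abel
            have h2 : j + k - k = j := by abel
            simp only [Equiv.coe_addRight, h1, h2]
            ring
        _ = a * a * ∑' j : Fin N → ℤ, gam α θ (m - j) * gam α θ j := tsum_mul_left
    rw [hre]
    have h2 : ∑' j : Fin N → ℤ, gam α θ (m - j) * gam α θ j ≤ C * gam α θ m := by
      rw [hCdef]; exact hconv
    have h3 : a * a * ∑' j : Fin N → ℤ, gam α θ (m - j) * gam α θ j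
        ≤ a * a * (C * gam α θ m) :=
      mul_le_mul_of_nonneg_left h2 (mul_nonneg ha0.le ha0.le)
    refine h3.trans ?_
    nlinarith [gam_pos (α := α) (θ := θ) m, ha0,
      mul_nonneg (mul_nonneg ha0.le (gam_pos (α := α) (θ := θ) m).le) (sub_nonneg.mpr haC)]
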